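/- The functions g_p(t) = min{1, (1 - e_p^{-t})/log(e_p) + p·t}, where e_p = (1-p)^{-1/p}, converge uniformly on [0,∞) to 1 - e^{-t} as p → 0⁺. In particular, for every ε > 0 there exists δ > 0 such that for all p ∈ (0, δ] and all t ≥ 0, g_p(t) ≤ 1 - e^{-t} + ε. -/

import Mathlib

set_option maxHeartbeats 1000000 in
/-- The functions `g_p(t) = min{1, (1 - e_p^{-t})/log e_p + p·t}` with
`e_p = (1-p)^{-1/p}` converge uniformly on `[0,∞)` to `1 - e^{-t}` as `p → 0⁺`;
in particular `g_p(t) ≤ 1 - e^{-t} + ε` for all small `p` and all `t ≥ 0`. -/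
theorem stmt5 :
    ∀ ε : ℝ, 0 < ε → ∃ δ : ℝ, 0 < δ ∧ ∀ p : ℝ, 0 < p → p ≤ δ → p < 1 → ∀ t : ℝ, 0 ≤ t →
      |min 1 ((1 - ((1 - p) ^ (-(1 / p) : ℝ)) ^ (-t : ℝ)) /
            Real.log ((1 - p) ^ (-(1 / p) : ℝ)) + p * t)
          - (1 - Real.exp (-t))| ≤ ε
      ∧ min 1 ((1 - ((1 - p) ^ (-(1 / p) : ℝ)) ^ (-t : ℝ)) /
            Real.log ((1 - p) ^ (-(1 / p) : ℝ)) + p * t)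
          ≤ 1 - Real.exp (-t) + ε := by
  intro ε hε
  set M : ℝ := max 0 (-Real.log ε) with hMdef
  have hM0 : (0:ℝ) ≤ M := le_max_left _ _
  have hden : (0:ℝ) < 2 * (1 + M) := by linarith
  refine ⟨min (min (1/2) (ε/4)) (ε/(2*(1+M))), ?_, ?_⟩
  · refine lt_min (lt_min (by norm_num) (by linarith)) (by positivity)
  intro p hp hpδ hp1 t ht
  have hp2 : p ≤ 1/2 := hpδ.trans ((min_le_left _ _).trans (min_le_left _ _))
  have hp4 : p ≤ ε/4 := hpδ.trans ((min_le_left _ _).trans (min_le_right _ _))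
  have hpM : p ≤ ε/(2*(1+M)) := hpδ.trans (min_le_right _ _)
  have hpM' : p * (2*(1+M)) ≤ ε := by
    rwa [le_div_iff₀ hden] at hpM
  have h1p : (0:ℝ) < 1 - p := by linarith
  set L : ℝ := Real.log ((1 - p) ^ (-(1 / p) : ℝ)) with hLdef
  have hLval : L = -(1/p) * Real.log (1-p) := Real.log_rpow h1p _
  have hlog1 : Real.log (1-p) ≤ -p := by
    have := Real.log_le_sub_one_of_pos h1p
    linarith
  have hlog2 : -Real.log (1-p) ≤ p/(1-p) := by
    have h := Real.log_le_sub_one_of_pos (inv_pos.mpr h1p)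
    rw [Real.log_inv] at h
    have : (1-p)⁻¹ - 1 = p/(1-p) := by field_simp; ring
    linarith [this ▸ h]
  have hL1 : 1 ≤ L := by
    rw [hLval]
    have h : -(1/p) * Real.log (1-p) = (-Real.log (1-p))/p := by ring
    rw [h, le_div_iff₀ hp]
    linarith
  have hL2 : L ≤ 1 + 2*p := by
    rw [hLval]
    have h : -(1/p) * Real.log (1-p) = (-Real.log (1-p))/p := by ring
    rw [h, div_le_iff₀ hp]
    have hh : p/(1-p) ≤ (1+2*p)*p := by
      rw [div_le_iff₀ h1p]
      nlinarith [mul_nonneg (mul_nonneg hp.le hp.le) (by linarith : (0:ℝ) ≤ 1 - 2*p)]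
    linarith
  have hLpos : (0:ℝ) < L := lt_of_lt_of_le one_pos hL1
  have hx : ((1 - p) ^ (-(1 / p) : ℝ)) ^ (-t : ℝ) = Real.exp (-(L * t)) := by
    rw [Real.rpow_def_of_pos (Real.rpow_pos_of_pos h1p _), ← hLdef]
    congr 1
    ring
  rw [hx]
  set A : ℝ := (1 - Real.exp (-(L * t))) / L + p * t with hAdef
  set f : ℝ := 1 - Real.exp (-t) with hfdef
  -- basic exponential facts
  have het0 : Real.exp (-t) ≤ 1 := Real.exp_le_one_iff.mpr (by linarith)
  have het1 : 0 < Real.exp (-t) := Real.exp_pos _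
  have heLt1 : Real.exp (-(L*t)) ≤ 1 := Real.exp_le_one_iff.mpr (by nlinarith)
  have heLt0 : 0 < Real.exp (-(L*t)) := Real.exp_pos _
  have hmono : Real.exp (-(L*t)) ≤ Real.exp (-t) := by
    apply Real.exp_le_exp.mpr
    nlinarith
  -- exp(-t) - exp(-Lt) ≤ L - 1
  have hdiff : Real.exp (-t) - Real.exp (-(L*t)) ≤ L - 1 := by
    have hsplit : Real.exp (-(L*t)) = Real.exp (-t) * Real.exp (-((L-1)*t)) := by
      rw [← Real.exp_add]; congr 1; ring
    have h1 : 1 - Real.exp (-((L-1)*t)) ≤ (L-1)*t := by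
      have := Real.add_one_le_exp (-((L-1)*t))
      nlinarith [Real.exp_pos (-((L-1)*t))]
    have h2 : t * Real.exp (-t) ≤ 1 := by
      have h3 : t ≤ Real.exp t := by linarith [Real.add_one_le_exp t]
      have h4 : Real.exp t * Real.exp (-t) = 1 := by
        rw [← Real.exp_add]; simp
      nlinarith
    have step1 : Real.exp (-t) * (1 - Real.exp (-((L-1)*t))) ≤ Real.exp (-t) * ((L-1)*t) :=
      mul_le_mul_of_nonneg_left h1 het1.le
    have step3 : (L-1) * (t * Real.exp (-t)) ≤ (L-1) * 1 :=
      mul_le_mul_of_nonneg_left h2 (by linarith)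
    rw [hsplit]
    calc Real.exp (-t) - Real.exp (-t) * Real.exp (-((L-1)*t))
        = Real.exp (-t) * (1 - Real.exp (-((L-1)*t))) := by ring
      _ ≤ Real.exp (-t) * ((L-1)*t) := step1
      _ = (L-1) * (t * Real.exp (-t)) := by ring
      _ ≤ (L-1) * 1 := step3
      _ = L - 1 := mul_one _
  have key : |min 1 A - f| ≤ ε := by
    rw [abs_le]
    constructor
    · -- lower bound: f - min 1 A ≤ ε
      rcases le_or_gt 1 A with hA | hA
      · rw [min_eq_left hA]
        have : f ≤ 1 := by rw [hfdef]; linarith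
        linarith
      · rw [min_eq_right hA.le]
        -- f - A ≤ ε
        have hdiv2 : (1 - Real.exp (-t)) - 2*p ≤ (1 - Real.exp (-(L*t))) / L := by
          rw [le_div_iff₀ hLpos]
          nlinarith [mul_le_mul_of_nonneg_right (by linarith : 1 - Real.exp (-t) ≤ 1)
              (by linarith : (0:ℝ) ≤ L - 1),
            mul_nonneg hp.le (sub_nonneg.mpr hL1)]
        have hpt : 0 ≤ p * t := mul_nonneg hp.le ht
        have : f - A ≤ ε := by
          rw [hfdef, hAdef]
          nlinarith
        linarith
    · -- upper bound: min 1 A - f ≤ ε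
      rcases le_or_gt (Real.exp (-t)) ε with he | he
      · have h1 : min 1 A ≤ 1 := min_le_left _ _
        rw [hfdef]
        linarith
      · -- t is small: t ≤ M, so p*t ≤ ε/2
        have htM : t ≤ M := by
          have hlt : Real.log ε < -t := by
            have h' : Real.exp (Real.log ε) < Real.exp (-t) := by
              rw [Real.exp_log hε]; exact he
            exact Real.exp_lt_exp.mp h'
          have : -Real.log ε ≤ M := le_max_right _ _
          linarith
        have hpt : p * t ≤ ε/2 := by
          have : p * t ≤ p * (1 + M) := by nlinarith
          nlinarith
        have hnum : (1 - Real.exp (-(L*t))) / L ≤ 1 - Real.exp (-(L*t)) :=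
          div_le_self (by linarith) hL1
        have h1 : min 1 A ≤ A := min_le_right _ _
        have : A - f ≤ ε := by
          rw [hAdef, hfdef]
          nlinarith
        linarith
  refine ⟨key, ?_⟩
  have := (abs_le.mp key).2
  rw [hfdef] at this ⊢
  linarith
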